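/- Let α ∈ (0,1]^k with α_1 ≥ ... ≥ α_k, Σ_i α_i > k−1, t the largest index with α_i = 1 (t=0 if none), and v = ⌈1/α_k⌉. The set of nonnegative integer solutions of α·x ≥ 1 is exactly the union of: (1) all x ≥ 0 with at least two nonzero coordinates; (2) z·e_i for 1 ≤ i ≤ t and integer z ≥ 1; (3) z·e_i for t < i < k and integer z ≥ 2; (4) z·e_k for integer z ≥ v. -/
import Mathlib

theorem stmt_5 (k : ℕ) (hk : 2 ≤ k) (α : Fin k → ℝ)
    (h0 : ∀ i, 0 < α i) (h1 : ∀ i, α i ≤ 1)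
    (hmono : ∀ i j : Fin k, i ≤ j → α j ≤ α i)
    (hsuml : (k : ℝ) - 1 < ∑ i, α i) (hsumu : ∑ i, α i ≤ (k : ℝ))
    (t : ℕ) (ht : ∀ i : Fin k, α i = 1 ↔ (i : ℕ) < t)
    (v : ℕ) (hv : (v : ℤ) = ⌈1 / α ⟨k - 1, by omega⟩⌉) :
    ∀ x : Fin k → ℕ, (1 ≤ ∑ i, α i * (x i : ℝ)) ↔
      (2 ≤ (Finset.univ.filter (fun i => 0 < x i)).card
        ∨ ∃ (i : Fin k) (z : ℕ), x = (fun j => if j = i then z else 0) ∧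
            (((i : ℕ) < t ∧ 1 ≤ z)
             ∨ (t ≤ (i : ℕ) ∧ (i : ℕ) < k - 1 ∧ 2 ≤ z)
             ∨ ((i : ℕ) = k - 1 ∧ v ≤ z))) := by
  have hkk : k - 1 < k := by omega
  set last : Fin k := ⟨k - 1, hkk⟩ with hlastdef
  -- any two α's sum to more than 1
  have hpair : ∀ i j : Fin k, i ≠ j → 1 < α i + α j := by
    intro i j hij
    have hsub : ({i, j} : Finset (Fin k)) ⊆ Finset.univ := Finset.subset_univ _
    have hsplit : ∑ l, α l = (∑ l ∈ Finset.univ \ {i, j}, α l) + (α i + α j) := by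
      rw [← Finset.sum_pair hij, Finset.sum_sdiff hsub]
    have hcard : (Finset.univ \ ({i, j} : Finset (Fin k))).card = k - 2 := by
      rw [Finset.card_sdiff_of_subset hsub, Finset.card_pair hij, Finset.card_univ, Fintype.card_fin]
    have hrest : ∑ l ∈ Finset.univ \ ({i, j} : Finset (Fin k)), α l ≤ (k : ℝ) - 2 := by
      calc ∑ l ∈ Finset.univ \ ({i, j} : Finset (Fin k)), α l
          ≤ ∑ _l ∈ Finset.univ \ ({i, j} : Finset (Fin k)), (1 : ℝ) :=
            Finset.sum_le_sum (fun l _ => h1 l)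
        _ = ((k - 2 : ℕ) : ℝ) := by rw [Finset.sum_const, hcard]; simp
        _ = (k : ℝ) - 2 := by
            have : ((k - 2 : ℕ) : ℝ) = (k : ℝ) - 2 := by
              push_cast [Nat.cast_sub hk]; ring
            rw [this]
    linarith
  have hαlt1 : ∀ i : Fin k, ¬ (i : ℕ) < t → α i < 1 := fun i h =>
    lt_of_le_of_ne (h1 i) (fun he => h ((ht i).1 he))
  intro x
  constructor
  · intro hx
    by_cases h2 : 2 ≤ (Finset.univ.filter (fun i => 0 < x i)).card
    · exact Or.inl h2
    right
    have hne : (Finset.univ.filter (fun i => 0 < x i)).Nonempty := by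
      by_contra h
      rw [Finset.not_nonempty_iff_eq_empty] at h
      have hz : ∀ i, x i = 0 := by
        intro i
        by_contra hxi
        have hmem : i ∈ Finset.univ.filter (fun i => 0 < x i) := by
          simp [Nat.pos_of_ne_zero hxi]
        simp [h] at hmem
      simp [hz] at hx
      linarith
    have hcard : (Finset.univ.filter (fun i => 0 < x i)).card = 1 := by
      have := Finset.card_pos.2 hne; omega
    obtain ⟨i, hi⟩ := Finset.card_eq_one.1 hcard
    have hxi : 0 < x i := by
      have hmem : i ∈ Finset.univ.filter (fun i => 0 < x i) := by rw [hi]; simp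
      simpa using hmem
    have hxj : ∀ j, j ≠ i → x j = 0 := by
      intro j hj
      by_contra hxj
      have hmem : j ∈ Finset.univ.filter (fun i => 0 < x i) := by
        simp [Nat.pos_of_ne_zero hxj]
      rw [hi] at hmem
      simp at hmem
      exact hj hmem
    have hxeq : x = fun j => if j = i then x i else 0 := by
      funext j
      by_cases hji : j = i
      · simp [hji]
      · simp [hji, hxj j hji]
    have hsum : ∑ j, α j * (x j : ℝ) = α i * (x i : ℝ) := by
      rw [Finset.sum_eq_single i]
      · intro j _ hj; rw [hxj j hj]; simp
      · intro h; exact absurd (Finset.mem_univ i) h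
    rw [hsum] at hx
    refine ⟨i, x i, hxeq, ?_⟩
    by_cases hit : (i : ℕ) < t
    · exact Or.inl ⟨hit, hxi⟩
    by_cases hik : (i : ℕ) = k - 1
    · refine Or.inr (Or.inr ⟨hik, ?_⟩)
      have hieq : last = i := by
        apply Fin.ext; simp [hlastdef, hik]
      have hαpos := h0 i
      have h1le : (1 : ℝ) / α i ≤ (x i : ℝ) := by
        rw [div_le_iff₀ hαpos]
        nlinarith [hαpos, hx]
      have hcle : (v : ℤ) ≤ (x i : ℤ) := by
        rw [hv, hieq]
        exact Int.ceil_le.2 (by exact_mod_cast h1le)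
      exact_mod_cast hcle
    · refine Or.inr (Or.inl ⟨Nat.le_of_not_lt hit, ?_, ?_⟩)
      · have := i.isLt; omega
      · by_contra h
        have hx1 : x i = 1 := by omega
        rw [hx1] at hx
        have := hαlt1 i hit
        simp at hx
        linarith
  · rintro (h2 | ⟨i, z, hxeq, hcases⟩)
    · obtain ⟨a, ha, b, hb, hab⟩ := Finset.one_lt_card.1 h2
      simp only [Finset.mem_filter, Finset.mem_univ, true_and] at ha hb
      have hsub : ({a, b} : Finset (Fin k)) ⊆ Finset.univ := Finset.subset_univ _
      have hge : α a * (x a : ℝ) + α b * (x b : ℝ) ≤ ∑ j, α j * (x j : ℝ) := by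
        rw [← Finset.sum_pair (f := fun j => α j * (x j : ℝ)) hab]
        apply Finset.sum_le_sum_of_subset_of_nonneg hsub
        intro j _ _
        exact mul_nonneg (h0 j).le (Nat.cast_nonneg _)
      have ha1 : (1 : ℝ) ≤ (x a : ℝ) := by exact_mod_cast ha
      have hb1 : (1 : ℝ) ≤ (x b : ℝ) := by exact_mod_cast hb
      have := hpair a b hab
      nlinarith [h0 a, h0 b]
    · have hsum : ∑ j, α j * (x j : ℝ) = α i * (z : ℝ) := by
        rw [hxeq, Finset.sum_eq_single i]
        · simp
        · intro j _ hj; simp [hj]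
        · intro h; exact absurd (Finset.mem_univ i) h
      rw [hsum]
      have hαpos := h0 i
      rcases hcases with ⟨hit, hz⟩ | ⟨hti, hik, hz⟩ | ⟨hik, hz⟩
      · have hα1 : α i = 1 := (ht i).2 hit
        have : (1 : ℝ) ≤ (z : ℝ) := by exact_mod_cast hz
        rw [hα1]; linarith
      · have hile : i ≤ last := by
          rw [Fin.le_def]; simp only [hlastdef]; omega
        have hne : i ≠ last := by
          intro heq
          rw [heq] at hik
          simp [hlastdef] at hik
        have h2α : 1 < α i + α i := by
          have := hpair i last hne
          have := hmono i last hile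
          linarith
        have : (2 : ℝ) ≤ (z : ℝ) := by exact_mod_cast hz
        nlinarith
      · have hieq : last = i := by
          apply Fin.ext; simp [hlastdef, hik]
        have hvge : (1 : ℝ) / α i ≤ (v : ℝ) := by
          have := Int.le_ceil ((1 : ℝ) / α i)
          rw [← hieq] at this ⊢
          rw [← hv] at this
          exact_mod_cast this
        have hzv : (v : ℝ) ≤ (z : ℝ) := by exact_mod_cast hz
        rw [div_le_iff₀ hαpos] at hvge
        nlinarith
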